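/- (Termination of the backtracking line search.) Suppose f : ℝ^N → ℝ is continuously differentiable with gradient ∇f Lipschitz continuous with constant ζ > 0. Let c ∈ (0,1), τ ∈ (0,1), let u ∈ ℝ^N, let Φ ≥ 0, and let p ∈ ℝ^N be a nonzero direction satisfying ⟨∇f(u), p⟩ = −Φ² with Φ > 0. Then there exists j ∈ ℕ such that the step-length γ = τʲ satisfies the Armijo condition f(u + γp) ≤ f(u) − c·γ·Φ² together with the lower bound γ ≥ min(1, 2(1 − c)τΦ² / (ζ‖p‖²)). -/

import Mathlib

open RealInnerProductSpace

section
variable {N : ℕ}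

-- descent lemma: f(u+γp) ≤ f u + γ⟪∇f u,p⟫ + ζ γ² ‖p‖²/2 for γ ≥ 0
theorem descent_lemma (f : EuclideanSpace ℝ (Fin N) → ℝ)
    (hf : ContDiff ℝ 1 f) (ζ : ℝ) (hζ : 0 < ζ)
    (hlip : ∀ u w : EuclideanSpace ℝ (Fin N),
      ‖gradient f u - gradient f w‖ ≤ ζ * ‖u - w‖)
    (u p : EuclideanSpace ℝ (Fin N)) (γ : ℝ) (hγ : 0 ≤ γ) :
    f (u + γ • p) ≤ f u + γ * ⟪gradient f u, p⟫ + ζ * γ ^ 2 * ‖p‖ ^ 2 / 2 := by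
  have hdiff : Differentiable ℝ f := hf.differentiable one_ne_zero
  set g : ℝ → ℝ := fun t => f (u + t • p) - (t * ⟪gradient f u, p⟫ + ζ * t ^ 2 * ‖p‖ ^ 2 / 2)
    with hg
  have hderiv : ∀ t : ℝ, HasDerivAt g
      (⟪gradient f (u + t • p), p⟫ - (⟪gradient f u, p⟫ + ζ * t * ‖p‖ ^ 2)) t := by
    intro t
    have h1 : HasDerivAt (fun t : ℝ => u + t • p) p t := by
      simpa using ((hasDerivAt_id t).smul_const p).const_add u
    have h2 : HasFDerivAt f (InnerProductSpace.toDual ℝ _ (gradient f (u + t • p)))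
        (u + t • p) := (hdiff _).hasGradientAt.hasFDerivAt
    have h3 : HasDerivAt (fun t : ℝ => f (u + t • p)) ⟪gradient f (u + t • p), p⟫ t := by
      have h5 := h2.comp_hasDerivAt t h1
      rw [InnerProductSpace.toDual_apply_apply] at h5
      exact h5
    have h4 : HasDerivAt (fun t : ℝ => t * ⟪gradient f u, p⟫ + ζ * t ^ 2 * ‖p‖ ^ 2 / 2)
        (⟪gradient f u, p⟫ + ζ * t * ‖p‖ ^ 2) t := by
      have : HasDerivAt (fun t : ℝ => t * ⟪gradient f u, p⟫ + ζ * t ^ 2 * ‖p‖ ^ 2 / 2)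
          (1 * ⟪gradient f u, p⟫ + ζ * (2 * t ^ 1) * ‖p‖ ^ 2 / 2) t := by
        exact ((hasDerivAt_id t).mul_const _).add
          ((((hasDerivAt_pow 2 t).const_mul ζ).mul_const _).div_const 2)
      convert this using 1; ring
    exact h3.sub h4
  have hanti : AntitoneOn g (Set.Icc 0 γ) := by
    apply antitoneOn_of_deriv_nonpos (convex_Icc 0 γ)
    · exact (Differentiable.continuous fun t => (hderiv t).differentiableAt).continuousOn
    · intro t ht
      exact ((hderiv t).differentiableAt).differentiableWithinAt
    · intro t ht
      rw [(hderiv t).deriv]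
      rw [interior_Icc] at ht
      have ht0 : 0 < t := ht.1
      have key : ⟪gradient f (u + t • p), p⟫ - ⟪gradient f u, p⟫ ≤ ζ * t * ‖p‖ ^ 2 := by
        have := inner_sub_left (𝕜 := ℝ) (gradient f (u + t • p)) (gradient f u) p ▸
          real_inner_le_norm (gradient f (u + t • p) - gradient f u) p
        calc ⟪gradient f (u + t • p), p⟫ - ⟪gradient f u, p⟫
            = ⟪gradient f (u + t • p) - gradient f u, p⟫ := by rw [inner_sub_left]
          _ ≤ ‖gradient f (u + t • p) - gradient f u‖ * ‖p‖ := real_inner_le_norm _ _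
          _ ≤ (ζ * ‖(u + t • p) - u‖) * ‖p‖ := by
              gcongr; exact hlip _ _
          _ = ζ * t * ‖p‖ ^ 2 := by
              simp [norm_smul, abs_of_pos ht0]; ring
      linarith
  have h0 : g γ ≤ g 0 := hanti (Set.left_mem_Icc.mpr hγ) (Set.right_mem_Icc.mpr hγ) hγ
  have e0 : g 0 = f u := by simp [hg]
  have h1 : f (u + γ • p) - (γ * ⟪gradient f u, p⟫ + ζ * γ ^ 2 * ‖p‖ ^ 2 / 2) ≤ f u := by
    rw [← e0]; exact h0
  linarith

end

/-- Termination of the backtracking line search: if `f` is continuously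
differentiable with `ζ`-Lipschitz gradient, `c, τ ∈ (0,1)`, `p ≠ 0` and
`⟪∇f(u), p⟫ = −Φ²` with `Φ > 0`, then some step-length `γ = τʲ` satisfies the
Armijo condition `f(u + γp) ≤ f(u) − cγΦ²` together with the lower bound
`γ ≥ min(1, 2(1 − c)τΦ² / (ζ‖p‖²))`. -/
theorem backtracking_terminates {N : ℕ} (f : EuclideanSpace ℝ (Fin N) → ℝ)
    (hf : ContDiff ℝ 1 f) (ζ : ℝ) (hζ : 0 < ζ)
    (hlip : ∀ u w : EuclideanSpace ℝ (Fin N),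
      ‖gradient f u - gradient f w‖ ≤ ζ * ‖u - w‖)
    (c τ : ℝ) (hc : c ∈ Set.Ioo (0 : ℝ) 1) (hτ : τ ∈ Set.Ioo (0 : ℝ) 1)
    (u p : EuclideanSpace ℝ (Fin N)) (hpne : p ≠ 0)
    (Φ : ℝ) (hΦ0 : 0 ≤ Φ) (hΦ : 0 < Φ)
    (hgrad : ⟪gradient f u, p⟫ = -Φ ^ 2) :
    ∃ j : ℕ,
      f (u + τ ^ j • p) ≤ f u - c * τ ^ j * Φ ^ 2 ∧
      min 1 (2 * (1 - c) * τ * Φ ^ 2 / (ζ * ‖p‖ ^ 2)) ≤ τ ^ j := by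

  obtain ⟨hc0, hc1⟩ := hc
  obtain ⟨hτ0, hτ1⟩ := hτ
  have hp : 0 < ‖p‖ := norm_pos_iff.mpr hpne
  have hp2 : 0 < ζ * ‖p‖ ^ 2 := by positivity
  set γbar : ℝ := 2 * (1 - c) * Φ ^ 2 / (ζ * ‖p‖ ^ 2) with hγbar
  have hγbarpos : 0 < γbar := by
    apply div_pos (by nlinarith [pow_pos hΦ 2]) hp2
  -- Armijo holds for any 0 < γ ≤ γbar
  have armijo : ∀ γ : ℝ, 0 < γ → γ ≤ γbar → f (u + γ • p) ≤ f u - c * γ * Φ ^ 2 := by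
    intro γ hγ0 hγle
    have hd := descent_lemma f hf ζ hζ hlip u p γ hγ0.le
    rw [hgrad] at hd
    have h2 : ζ * γ * ‖p‖ ^ 2 ≤ 2 * (1 - c) * Φ ^ 2 := by
      rw [hγbar, le_div_iff₀ hp2] at hγle
      nlinarith
    nlinarith
  by_cases h1 : (1 : ℝ) ≤ γbar
  · exact ⟨0, by simpa using armijo 1 one_pos h1, by simp⟩
  · push_neg at h1
    have hex : ∃ n : ℕ, τ ^ n ≤ γbar := by
      obtain ⟨n, hn⟩ := exists_pow_lt_of_lt_one hγbarpos hτ1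
      exact ⟨n, hn.le⟩
    set j := Nat.find hex with hj
    have hjle : τ ^ j ≤ γbar := Nat.find_spec hex
    have hjpos : 0 < τ ^ j := pow_pos hτ0 j
    refine ⟨j, armijo _ hjpos hjle, ?_⟩
    have hj0 : j ≠ 0 := by
      intro h
      rw [h, pow_zero] at hjle
      linarith
    have hprev : γbar < τ ^ (j - 1) := by
      have := Nat.find_min hex (m := j - 1) (by omega)
      push_neg at this
      exact this
    have : τ * γbar < τ ^ j := by
      calc τ * γbar < τ * τ ^ (j - 1) := by nlinarith
        _ = τ ^ j := by rw [← pow_succ']; congr 1; omega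
    refine le_trans (min_le_right _ _) ?_
    have : 2 * (1 - c) * τ * Φ ^ 2 / (ζ * ‖p‖ ^ 2) = τ * γbar := by
      rw [hγbar]; ring
    linarith
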